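/- Let n ∈ ℕ and let K₊ and K₋ be two disjoint compact subsets of Euclidean space ℝⁿ such that the complements ℝⁿ ∖ K₊ and ℝⁿ ∖ K₋ are both connected. Then the complement ℝⁿ ∖ (K₊ ∪ K₋) is connected. -/

import Mathlib

open Set Metric Complex Real

noncomputable section

/-- A continuous real-valued function taking integer values on a preconnected set
takes equal values at any two points. -/
private lemma intValued_apply_eq {X : Type*} [TopologicalSpace X] {s : Set X}
    (hs : IsPreconnected s) {g : X → ℝ} (hg : ContinuousOn g s)
    (hint : ∀ x ∈ s, ∃ m : ℤ, g x = m) {x y : X} (hx : x ∈ s) (hy : y ∈ s) :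
    g x = g y := by
  have himg : IsPreconnected (g '' s) := hs.image g hg
  have hord := himg.ordConnected
  have key : ∀ p q : X, p ∈ s → q ∈ s → ∀ mp mq : ℤ, g p = mp → g q = mq → ¬ (mp < mq) := by
    intro p q hp hq mp mq hgp hgq hlt
    have hmem : ((mp : ℝ) + 1/2) ∈ g '' s := by
      apply hord.out (mem_image_of_mem g hp) (mem_image_of_mem g hq)
      constructor
      · rw [hgp]; linarith
      · rw [hgq]
        have : (mp : ℝ) + 1 ≤ mq := by exact_mod_cast hlt
        linarith
    obtain ⟨z, hz, hgz⟩ := hmem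
    obtain ⟨k, hk⟩ := hint z hz
    rw [hk] at hgz
    have h2 : (2 * k : ℤ) = 2 * mp + 1 := by
      have : (2 * (k : ℝ)) = 2 * mp + 1 := by linarith
      exact_mod_cast this
    omega
  obtain ⟨mx, hmx⟩ := hint x hx
  obtain ⟨my, hmy⟩ := hint y hy
  rcases lt_trichotomy mx my with h | h | h
  · exact absurd h (key x y hx hy mx my hmx hmy)
  · rw [hmx, hmy, h]
  · exact absurd h (key y x hy hx my mx hmy hmx)

/-- A continuous unimodular function on a proper real normed space which is `1`
far away admits a continuous logarithm (lift along `exp (θ i)`). -/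
private lemma exists_real_lift {E : Type*} [NormedAddCommGroup E] [NormedSpace ℝ E]
    [ProperSpace E] {f : E → ℂ} (hf : Continuous f)
    (hnorm : ∀ x, ‖f x‖ = 1) {R : ℝ} (hR : 0 < R)
    (hfar : ∀ x : E, R ≤ ‖x‖ → f x = 1) :
    ∃ F : E → ℝ, Continuous F ∧ ∀ x, Complex.exp ((F x : ℂ) * Complex.I) = f x := by
  have hfne : ∀ y, f y ≠ 0 := by
    intro y h
    have := hnorm y
    rw [h] at this
    simp at this
  -- the retraction onto the closed ball of radius R
  set r : E → E := fun x => (R / max R ‖x‖) • x with hrdef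
  have hmax : ∀ x : E, 0 < max R ‖x‖ := fun x => lt_max_iff.2 (Or.inl hR)
  have hrcont : Continuous r := by
    exact (continuous_const.div (continuous_const.max continuous_norm)
      (fun x => (hmax x).ne')).smul continuous_id
  have hrnorm : ∀ x, ‖r x‖ ≤ R := by
    intro x
    rw [hrdef]
    simp only [norm_smul, Real.norm_eq_abs]
    rw [_root_.abs_of_nonneg (div_nonneg hR.le (hmax x).le), div_mul_eq_mul_div,
      div_le_iff₀ (hmax x)]
    exact mul_le_mul_of_nonneg_left (le_max_right _ _) hR.le
  have hfr : ∀ x, f (r x) = f x := by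
    intro x
    rcases le_or_gt ‖x‖ R with h | h
    · have hmx : max R ‖x‖ = R := max_eq_left h
      simp [hrdef, hmx, div_self hR.ne']
    · have hm : max R ‖x‖ = ‖x‖ := max_eq_right h.le
      have hx0 : ‖x‖ ≠ 0 := ne_of_gt (hR.trans h)
      have h1 : ‖r x‖ = R := by
        rw [hrdef]
        simp only [norm_smul, Real.norm_eq_abs, hm]
        rw [_root_.abs_of_nonneg (div_nonneg hR.le (norm_nonneg x))]
        field_simp
      rw [hfar x h.le, hfar _ h1.ge]
  have hmemD : ∀ t : ℝ, t ∈ Icc (0:ℝ) 1 → ∀ x, (t • r x) ∈ closedBall (0:E) R := by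
    intro t ht x
    rw [mem_closedBall, dist_zero_right, norm_smul, Real.norm_eq_abs, _root_.abs_of_nonneg ht.1]
    calc t * ‖r x‖ ≤ 1 * R := mul_le_mul ht.2 (hrnorm x) (norm_nonneg _) zero_le_one
    _ = R := one_mul R
  -- uniform continuity on the ball
  have hucomp := (isCompact_closedBall (0:E) R).uniformContinuousOn_of_continuous
    hf.continuousOn
  rw [Metric.uniformContinuousOn_iff] at hucomp
  obtain ⟨δ, hδ, hδ'⟩ := hucomp 1 one_pos
  obtain ⟨N, hN⟩ := exists_nat_gt (R / δ)
  have hNpos : 0 < (N : ℝ) := lt_of_le_of_lt (div_nonneg hR.le hδ.le) hN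
  have hN0 : (N : ℝ) ≠ 0 := hNpos.ne'
  have hRNδ : R / N < δ := by
    rw [div_lt_iff₀ hNpos]
    rw [div_lt_iff₀ hδ] at hN
    linarith [hN]
  have hmem01 : ∀ k : ℕ, k ≤ N → ((k : ℝ) / N) ∈ Icc (0:ℝ) 1 := by
    intro k hk
    constructor
    · positivity
    · rw [div_le_one hNpos]
      exact_mod_cast hk
  have hstep : ∀ k : ℕ, k < N →
      ∀ x, dist (f ((((k:ℝ)+1)/N) • r x)) (f (((k:ℝ)/N) • r x)) < 1 := by
    intro k hk x
    have hk1 : ((k:ℝ)+1)/N = ((k+1 : ℕ) : ℝ)/N := by push_cast; ring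
    have hm1 : (((k:ℝ)+1)/N) ∈ Icc (0:ℝ) 1 := by rw [hk1]; exact hmem01 (k+1) hk
    have hm2 : ((k:ℝ)/N) ∈ Icc (0:ℝ) 1 := hmem01 k hk.le
    apply hδ' _ (hmemD _ hm1 x) _ (hmemD _ hm2 x)
    have hdist : dist ((((k:ℝ)+1)/N) • r x) (((k:ℝ)/N) • r x) = (1/N) * ‖r x‖ := by
      rw [dist_eq_norm, ← sub_smul, norm_smul, Real.norm_eq_abs]
      congr 1
      rw [div_sub_div_same]
      ring_nf
      rw [_root_.abs_of_nonneg (by positivity)]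
    rw [hdist]
    calc (1/N) * ‖r x‖ ≤ (1/N) * R := by
          exact mul_le_mul_of_nonneg_left (hrnorm x) (by positivity)
    _ = R / N := by ring
    _ < δ := hRNδ
  -- the incremental factors
  set q : ℕ → E → ℂ :=
    fun k x => f ((((k:ℝ)+1)/N) • r x) * (f (((k:ℝ)/N) • r x))⁻¹ with hqdef
  have hqabs : ∀ k x, ‖q k x‖ = 1 := by
    intro k x
    simp [hqdef, norm_mul, norm_inv, hnorm]
  have hqsub : ∀ k, k < N → ∀ x, ‖q k x - 1‖ < 1 := by
    intro k hk x
    have hb := hfne (((k:ℝ)/N) • r x)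
    have hq1 : q k x - 1 =
        (f ((((k:ℝ)+1)/N) • r x) - f (((k:ℝ)/N) • r x)) * (f (((k:ℝ)/N) • r x))⁻¹ := by
      field_simp [hqdef]
      simp only [hqdef]
      rw [sub_mul, mul_assoc, inv_mul_cancel₀ hb, mul_one, one_mul]
    rw [hq1, norm_mul, norm_inv, hnorm, inv_one, mul_one, ← Complex.dist_eq]
    exact hstep k hk x
  have hqslit : ∀ k, k < N → ∀ x, q k x ∈ Complex.slitPlane := by
    intro k hk x
    have h1 : |(q k x - 1).re| ≤ ‖q k x - 1‖ := Complex.abs_re_le_norm _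
    have h2 := hqsub k hk x
    have h3 : (q k x).re = 1 + (q k x - 1).re := by simp [Complex.sub_re]
    have h4 : |(q k x - 1).re| < 1 := lt_of_le_of_lt h1 h2
    left
    rw [h3]
    have := abs_lt.1 h4
    linarith [this.1]
  have hqexp : ∀ k, k < N → ∀ x,
      Complex.exp ((Complex.arg (q k x) : ℂ) * I) = q k x := by
    intro k hk x
    have := Complex.norm_mul_exp_arg_mul_I (q k x)
    rwa [hqabs k x, Complex.ofReal_one, one_mul] at this
  have hqcont : ∀ k, Continuous (q k) := by
    intro k
    exact (hf.comp (hrcont.const_smul _)).mul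
      ((hf.comp (hrcont.const_smul _)).inv₀ (fun x => hfne _))
  refine ⟨fun x => Complex.arg (f 0) + ∑ k ∈ Finset.range N, Complex.arg (q k x), ?_, ?_⟩
  · apply continuous_const.add
    apply continuous_finset_sum
    intro k hk
    rw [continuous_iff_continuousAt]
    intro x
    exact (Complex.continuousAt_arg (hqslit k (Finset.mem_range.1 hk) x)).comp
      (hqcont k).continuousAt
  · intro x
    have htel : ∀ m : ℕ, m ≤ N → f 0 * ∏ k ∈ Finset.range m, q k x
        = f (((m:ℝ)/N) • r x) := by
      intro m
      induction m with
      | zero => intro _; simp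
      | succ m ih =>
        intro hm
        rw [Finset.prod_range_succ, ← mul_assoc, ih (Nat.le_of_succ_le hm)]
        have hb := hfne (((m:ℝ)/N) • r x)
        have hcast : (((m+1:ℕ) : ℝ)) = (m:ℝ)+1 := by push_cast; ring
        rw [hcast]
        field_simp [hqdef]
        simp only [hqdef]
        rw [mul_comm, mul_assoc, inv_mul_cancel₀ hb, mul_one]
    have hfin := htel N le_rfl
    rw [div_self hN0, one_smul, hfr] at hfin
    have hsumcast : ((Complex.arg (f 0) + ∑ k ∈ Finset.range N, Complex.arg (q k x) : ℝ) : ℂ)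
        = (Complex.arg (f 0) : ℂ) + ∑ k ∈ Finset.range N, (Complex.arg (q k x) : ℂ) := by
      push_cast
      ring
    rw [hsumcast, add_mul, Complex.exp_add, Finset.sum_mul, Complex.exp_sum]
    have h0 : Complex.exp ((Complex.arg (f 0) : ℂ) * I) = f 0 := by
      have := Complex.norm_mul_exp_arg_mul_I (f 0)
      rwa [hnorm 0, Complex.ofReal_one, one_mul] at this
    rw [h0, Finset.prod_congr rfl (fun k hk => hqexp k (Finset.mem_range.1 hk) x)]
    exact hfin

end

/-- **Disjoint union of compact subsets with connected complement.**
If `K₊` and `K₋` are two disjoint compact subsets of Euclidean space `ℝⁿ`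
whose complements are connected, then the complement of `K₊ ∪ K₋` is connected. -/
theorem union_compl_connected_of_disjoint_compact
    (n : ℕ) (Kp Km : Set (EuclideanSpace ℝ (Fin n)))
    (hKp : IsCompact Kp) (hKm : IsCompact Km) (hdisj : Disjoint Kp Km)
    (hcp : IsConnected Kpᶜ) (hcm : IsConnected Kmᶜ) :
    IsConnected (Kp ∪ Km)ᶜ := by
  classical
  constructor
  · -- nonemptiness
    rcases subsingleton_or_nontrivial (EuclideanSpace ℝ (Fin n)) with hsub | hnt
    · obtain ⟨x, hx⟩ := hcp.nonempty
      obtain ⟨y, hy⟩ := hcm.nonempty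
      refine ⟨x, ?_⟩
      simp only [mem_compl_iff, mem_union]
      push_neg
      exact ⟨hx, by rwa [Subsingleton.elim x y]⟩
    · exact Set.nonempty_compl.2 (hKp.union hKm).ne_univ
  · -- preconnectedness
    intro O₁ O₂ h₁ h₂ hsub hne₁ hne₂
    by_contra hcon
    rw [Set.not_nonempty_iff_eq_empty] at hcon
    have hsopen : IsOpen (Kp ∪ Km)ᶜ := (hKp.union hKm).isClosed.isOpen_compl
    set A := (Kp ∪ Km)ᶜ ∩ O₁ with hAdef
    set B := (Kp ∪ Km)ᶜ ∩ O₂ with hBdef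
    have hAopen : IsOpen A := hsopen.inter h₁
    have hBopen : IsOpen B := hsopen.inter h₂
    have hAne : A.Nonempty := hne₁
    have hBne : B.Nonempty := hne₂
    have hABdisj : ∀ x, x ∈ A → x ∈ B → False := fun x hxA hxB =>
      (Set.eq_empty_iff_forall_notMem.1 hcon x) ⟨hxA.1, hxA.2, hxB.2⟩
    have hABcover : ∀ x, x ∉ Kp → x ∉ Km → x ∈ A ∨ x ∈ B := by
      intro x hp hm
      have hxs : x ∈ (Kp ∪ Km)ᶜ := by simp [hp, hm]
      rcases hsub hxs with h | h
      · exact Or.inl ⟨hxs, h⟩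
      · exact Or.inr ⟨hxs, h⟩
    have hclAB : ∀ x, x ∈ closure A → x ∈ B → False := by
      have hsubc : A ⊆ Bᶜ := fun x hx hxB => hABdisj x hx hxB
      have h := closure_minimal hsubc hBopen.isClosed_compl
      exact fun x hx hxB => (h hx) hxB
    have hclBA : ∀ x, x ∈ closure B → x ∈ A → False := by
      have hsubc : B ⊆ Aᶜ := fun x hx hxA => hABdisj x hxA hx
      have h := closure_minimal hsubc hAopen.isClosed_compl
      exact fun x hx hxA => (h hx) hxA
    set SA := closure A ∪ (Kp ∪ Km) with hSAdef
    set SB := closure B ∪ (Kp ∪ Km) with hSBdef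
    have hSAclosed : IsClosed SA := isClosed_closure.union (hKp.union hKm).isClosed
    have hcover : ∀ x, x ∉ SA → x ∈ SB := by
      intro x hx
      by_cases hp : x ∈ Kp
      · exact absurd (Or.inr (Or.inl hp)) hx
      by_cases hm : x ∈ Km
      · exact absurd (Or.inr (Or.inr hm)) hx
      rcases hABcover x hp hm with h | h
      · exact absurd (Or.inl (subset_closure h)) hx
      · exact Or.inl (subset_closure h)
    have hSASB : ∀ x, x ∈ SA → x ∈ SB → x ∈ Kp ∪ Km := by
      intro x hxa hxb
      by_cases hp : x ∈ Kp
      · exact Or.inl hp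
      by_cases hm : x ∈ Km
      · exact Or.inr hm
      exfalso
      rcases hxa with h | h
      swap
      · exact absurd h (by simp [hp, hm])
      rcases hxb with h' | h'
      swap
      · exact absurd h' (by simp [hp, hm])
      rcases hABcover x hp hm with hA' | hB'
      · exact hclBA x h' hA'
      · exact hclAB x h hB'
    have hfrontSA : ∀ x, x ∈ frontier SA → x ∈ Kp ∪ Km := by
      intro x hx
      have hxSA : x ∈ SA := hSAclosed.frontier_subset hx
      by_cases hp : x ∈ Kp
      · exact Or.inl hp
      by_cases hm : x ∈ Km
      · exact Or.inr hm
      exfalso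
      rcases hABcover x hp hm with h | h
      · have hAS : A ⊆ SA := fun y hy => Or.inl (subset_closure hy)
        have : x ∈ interior SA := interior_maximal hAS hAopen h
        exact hx.2 this
      · rcases hxSA with h' | h'
        · exact hclAB x h' h
        · exact absurd h' (by simp [hp, hm])
    -- a ball containing Km and the Urysohn function
    obtain ⟨R₀, hR₀pos, hKmball⟩ := hKm.isBounded.subset_ball_lt 0 0
    have hC1closed : IsClosed (Kp ∪ (Metric.ball (0 : EuclideanSpace ℝ (Fin n)) R₀)ᶜ) :=
      hKp.isClosed.union Metric.isOpen_ball.isClosed_compl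
    have hC1disj : Disjoint (Kp ∪ (Metric.ball (0 : EuclideanSpace ℝ (Fin n)) R₀)ᶜ) Km := by
      rw [Set.disjoint_union_left]
      exact ⟨hdisj, Set.disjoint_left.2 fun x hx hxm => hx (hKmball hxm)⟩
    obtain ⟨u, hu0, hu1, hu01⟩ :=
      exists_continuous_zero_one_of_isClosed hC1closed hKm.isClosed hC1disj
    have huKp : ∀ x ∈ Kp, u x = 0 := fun x hx => by simpa using hu0 (Or.inl hx)
    have hufar : ∀ x : EuclideanSpace ℝ (Fin n), R₀ ≤ ‖x‖ → u x = 0 := by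
      intro x hx
      have hxm : x ∈ (Metric.ball (0 : EuclideanSpace ℝ (Fin n)) R₀)ᶜ := by
        simp only [mem_compl_iff, Metric.mem_ball, dist_zero_right, not_lt]
        exact hx
      simpa using hu0 (Or.inr hxm)
    have huKm : ∀ x ∈ Km, u x = 1 := fun x hx => by simpa using hu1 hx
    -- the circle-valued map
    set f : EuclideanSpace ℝ (Fin n) → ℂ :=
      SA.piecewise (fun x => Complex.exp ((↑(π * u x)) * Complex.I))
        (fun x => Complex.exp (-(↑(π * u x)) * Complex.I)) with hfdef
    have hbranch : ∀ x, x ∈ Kp ∪ Km →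
        Complex.exp ((↑(π * u x)) * Complex.I) = Complex.exp (-(↑(π * u x)) * Complex.I) := by
      rintro x (hx | hx)
      · rw [huKp x hx]; norm_num
      · rw [huKm x hx]
        simp only [mul_one, Complex.ofReal_mul]
        rw [neg_mul, Complex.exp_neg, Complex.exp_pi_mul_I]
        norm_num
    have hbcont1 : Continuous fun x : EuclideanSpace ℝ (Fin n) =>
        Complex.exp ((↑(π * u x)) * Complex.I) :=
      Complex.continuous_exp.comp
        ((Complex.continuous_ofReal.comp (continuous_const.mul u.continuous)).mul
          continuous_const)
    have hbcont2 : Continuous fun x : EuclideanSpace ℝ (Fin n) =>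
        Complex.exp (-(↑(π * u x)) * Complex.I) :=
      Complex.continuous_exp.comp
        (((Complex.continuous_ofReal.comp (continuous_const.mul u.continuous)).neg).mul
          continuous_const)
    have hfcont : Continuous f :=
      Continuous.piecewise (fun a ha => hbranch a (hfrontSA a ha)) hbcont1 hbcont2
    have hfnorm : ∀ x, ‖f x‖ = 1 := by
      intro x
      by_cases hx : x ∈ SA
      · rw [hfdef, Set.piecewise_eq_of_mem _ _ _ hx]
        exact Complex.norm_exp_ofReal_mul_I _
      · rw [hfdef, Set.piecewise_eq_of_notMem _ _ _ hx, ← Complex.ofReal_neg]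
        exact Complex.norm_exp_ofReal_mul_I _
    have hffar : ∀ x : EuclideanSpace ℝ (Fin n), R₀ ≤ ‖x‖ → f x = 1 := by
      intro x hx
      have h0 := hufar x hx
      by_cases hxa : x ∈ SA
      · rw [hfdef, Set.piecewise_eq_of_mem _ _ _ hxa, h0]; norm_num
      · rw [hfdef, Set.piecewise_eq_of_notMem _ _ _ hxa, h0]; norm_num
    obtain ⟨F, hFcont, hFexp⟩ := exists_real_lift hfcont hfnorm hR₀pos hffar
    have hπ : (2 * π : ℝ) ≠ 0 := by positivity
    set v : EuclideanSpace ℝ (Fin n) → ℝ := fun x => (F x - π * u x) / (2 * π) with hvdef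
    set w : EuclideanSpace ℝ (Fin n) → ℝ := fun x => (F x + π * u x) / (2 * π) with hwdef
    have hvcont : Continuous v :=
      (hFcont.sub (continuous_const.mul u.continuous)).div_const _
    have hwcont : Continuous w :=
      (hFcont.add (continuous_const.mul u.continuous)).div_const _
    have hexp_eq : ∀ a b : ℝ, Complex.exp ((a : ℂ) * Complex.I) =
        Complex.exp ((b : ℂ) * Complex.I) → ∃ m : ℤ, a = b + m * (2 * π) := by
      intro a b h
      rw [Complex.exp_eq_exp_iff_exists_int] at h
      obtain ⟨m, hm⟩ := h
      refine ⟨m, ?_⟩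
      have him := congrArg Complex.im hm
      simp only [Complex.mul_im, Complex.add_im, Complex.ofReal_re, Complex.ofReal_im,
        Complex.I_re, Complex.I_im, Complex.mul_re, Complex.intCast_re, Complex.intCast_im,
        Complex.ofReal_mul, Complex.re_ofNat, Complex.im_ofNat] at him
      linarith [him]
    have hvint : ∀ x, x ∈ SA → ∃ m : ℤ, v x = m := by
      intro x hx
      have hfx : f x = Complex.exp ((↑(π * u x)) * Complex.I) :=
        Set.piecewise_eq_of_mem _ _ _ hx
      obtain ⟨m, hm⟩ := hexp_eq (F x) (π * u x) (by rw [hFexp x, hfx])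
      refine ⟨m, ?_⟩
      rw [hvdef]
      show (F x - π * u x) / (2 * π) = m
      rw [hm]
      field_simp
      ring
    have hwint : ∀ x, x ∈ SB → ∃ m : ℤ, w x = m := by
      intro x hx
      have hfx : f x = Complex.exp (-(↑(π * u x)) * Complex.I) := by
        by_cases hxa : x ∈ SA
        · rw [hfdef, Set.piecewise_eq_of_mem _ _ _ hxa]
          exact hbranch x (hSASB x hxa hx)
        · exact Set.piecewise_eq_of_notMem _ _ _ hxa
      have hfx' : f x = Complex.exp ((↑(-(π * u x))) * Complex.I) := by
        rwa [Complex.ofReal_neg]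
      obtain ⟨m, hm⟩ := hexp_eq (F x) (-(π * u x)) (by rw [hFexp x, hfx'])
      refine ⟨m, ?_⟩
      rw [hwdef]
      show (F x + π * u x) / (2 * π) = m
      rw [hm]
      field_simp
      ring
    -- the two piecewise integer functions
    set g : EuclideanSpace ℝ (Fin n) → ℝ := SA.piecewise v w with hgdef
    set g' : EuclideanSpace ℝ (Fin n) → ℝ := SA.piecewise v (fun x => w x - 1) with hg'def
    have hgcont : ContinuousOn g Kmᶜ := by
      apply ContinuousOn.piecewise
      · rintro a ⟨ham, haf⟩
        rcases hfrontSA a haf with h | h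
        · have := huKp a h
          simp only [hvdef, hwdef, this]
          ring
        · exact absurd h ham
      · exact hvcont.continuousOn
      · exact hwcont.continuousOn
    have hg'cont : ContinuousOn g' Kpᶜ := by
      apply ContinuousOn.piecewise
      · rintro a ⟨hap, haf⟩
        rcases hfrontSA a haf with h | h
        · exact absurd h hap
        · have := huKm a h
          simp only [hvdef, hwdef, this]
          field_simp
          ring
      · exact hvcont.continuousOn
      · exact (hwcont.sub continuous_const).continuousOn
    have hgint : ∀ x ∈ Kmᶜ, ∃ m : ℤ, g x = m := by
      intro x _
      by_cases hxa : x ∈ SA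
      · rw [hgdef, Set.piecewise_eq_of_mem _ _ _ hxa]
        exact hvint x hxa
      · rw [hgdef, Set.piecewise_eq_of_notMem _ _ _ hxa]
        exact hwint x (hcover x hxa)
    have hg'int : ∀ x ∈ Kpᶜ, ∃ m : ℤ, g' x = m := by
      intro x _
      by_cases hxa : x ∈ SA
      · rw [hg'def, Set.piecewise_eq_of_mem _ _ _ hxa]
        exact hvint x hxa
      · rw [hg'def, Set.piecewise_eq_of_notMem _ _ _ hxa]
        obtain ⟨m, hm⟩ := hwint x (hcover x hxa)
        exact ⟨m - 1, by push_cast; linarith⟩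
    -- evaluate at points of A and B
    obtain ⟨a, haA⟩ := hAne
    obtain ⟨b, hbB⟩ := hBne
    have haKm : a ∈ Kmᶜ := fun h => haA.1 (Or.inr h)
    have hbKm : b ∈ Kmᶜ := fun h => hbB.1 (Or.inr h)
    have haKp : a ∈ Kpᶜ := fun h => haA.1 (Or.inl h)
    have hbKp : b ∈ Kpᶜ := fun h => hbB.1 (Or.inl h)
    have haSA : a ∈ SA := Or.inl (subset_closure haA)
    have hbSA : b ∉ SA := by
      rintro (h | h)
      · exact hclAB b h hbB
      · exact hbB.1 h
    have hga : g a = v a := Set.piecewise_eq_of_mem _ _ _ haSA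
    have hgb : g b = w b := Set.piecewise_eq_of_notMem _ _ _ hbSA
    have hg'a : g' a = v a := Set.piecewise_eq_of_mem _ _ _ haSA
    have hg'b : g' b = w b - 1 := Set.piecewise_eq_of_notMem _ _ _ hbSA
    have h1 : g a = g b := intValued_apply_eq hcm.isPreconnected hgcont hgint haKm hbKm
    have h2 : g' a = g' b := intValued_apply_eq hcp.isPreconnected hg'cont hg'int haKp hbKp
    rw [hga, hgb] at h1
    rw [hg'a, hg'b] at h2
    linarith
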